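/- In PSL(2,ℂ), the element x has order 5, y has order 2, z has order 2, z·x⁻¹ has order 3, x·y⁻¹ has order 3, and y·z⁻¹ has order 3 (so x, y, z satisfy the defining relations of the tetrahedral group presentation Γ(5,2,2,3,3,3) = ⟨x,y,z | x⁵, y², z², (zx⁻¹)³, (xy⁻¹)³, (yz⁻¹)³⟩). -/

import Mathlib

/-!
Setup: `PSL(2,ℂ)` as the quotient of `SL(2,ℂ)` by its center, the constants
`u = (1+√5)/2`, `ω = (1+√(-3))/2 = (1+√3·i)/2`, and the generators of the
tetrahedral groups of Neumann–Reid.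
-/

noncomputable section

abbrev SL2C := Matrix.SpecialLinearGroup (Fin 2) ℂ

/-- `PSL(2,ℂ)`, the quotient of `SL(2,ℂ)` by its center `{±I}`. -/
abbrev PSL2C := SL2C ⧸ Subgroup.center SL2C

/-- The projection `SL(2,ℂ) → PSL(2,ℂ)`, `A ↦ [A]`. -/
def pr : SL2C →* PSL2C := QuotientGroup.mk' _

def u : ℂ := ((1 + Real.sqrt 5) / 2 : ℝ)
def ω : ℂ := (1 + Real.sqrt 3 * Complex.I) / 2

lemma u_ne : u ≠ 0 := Complex.ofReal_ne_zero.mpr (by positivity)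

lemma ω_ne : ω ≠ 0 := by
  unfold ω
  intro h
  rw [div_eq_zero_iff] at h
  rcases h with h | h
  · have := congrArg Complex.re h
    simp at this
  · norm_num at h

def xSL : SL2C := ⟨!![u, -u⁻¹; u, 0], by
  rw [Matrix.det_fin_two_of]; field_simp [u_ne]; ring⟩

def ySL : SL2C := ⟨!![0, ω * u⁻¹; -ω⁻¹ * u, 0], by
  rw [Matrix.det_fin_two_of]; field_simp [u_ne, ω_ne]; ring⟩

def zSL : SL2C := ⟨!![0, ω ^ 2 * u⁻¹; -(ω ^ 2)⁻¹ * u, 0], by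
  rw [Matrix.det_fin_two_of]; field_simp [u_ne, ω_ne]; ring⟩

def x : PSL2C := pr xSL
def y : PSL2C := pr ySL
def z : PSL2C := pr zSL

/-- `x, y, z` satisfy the defining relations of `Γ(5,2,2,3,3,3)`. -/
lemma h5c : ((Real.sqrt 5 : ℝ) : ℂ) ^ 2 = 5 := by
  norm_cast; exact_mod_cast Real.sq_sqrt (by norm_num)
lemma ht : ((Real.sqrt 3 : ℝ) : ℂ) * Complex.I * (((Real.sqrt 3:ℝ):ℂ) * Complex.I) = -3 := by
  have h3 : ((Real.sqrt 3 : ℝ) : ℂ) ^ 2 = 3 := by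
    norm_cast; exact_mod_cast Real.sq_sqrt (by norm_num)
  linear_combination Complex.I ^ 2 * h3 + 3 * Complex.I_sq
lemma hu : u ^ 2 = u + 1 := by
  unfold u; push_cast; linear_combination (1/4) * h5c
lemma hω : ω ^ 2 = ω - 1 := by
  unfold ω; linear_combination (1/4) * ht
lemma huinv : u⁻¹ = u - 1 := inv_eq_of_mul_eq_one_right (by linear_combination hu)
lemma hωinv : ω⁻¹ = 1 - ω := inv_eq_of_mul_eq_one_right (by linear_combination -hω)
lemma hω2inv : (ω ^ 2)⁻¹ = -ω := inv_eq_of_mul_eq_one_right (by linear_combination (-ω-1) * hω)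
lemma ω_ne_two : ω ≠ 2 := by
  intro h
  have him := congrArg Complex.im h
  simp [ω] at him

lemma order_helper (A : SL2C) (n : ℕ) [Fact n.Prime] (r : ℂ) (hr : r ^ 2 = 1)
    (h : Matrix.scalar (Fin 2) r = ↑(A ^ n)) (hA : pr A ≠ 1) : orderOf (pr A) = n := by
  refine orderOf_eq_prime ?_ hA
  rw [← map_pow, pr, QuotientGroup.mk'_apply, QuotientGroup.eq_one_iff]
  exact Matrix.SpecialLinearGroup.mem_center_iff.mpr ⟨r, by simpa using hr, h⟩

lemma ne_one_helper (A : SL2C) (hA : ∀ r : ℂ, Matrix.scalar (Fin 2) r ≠ ↑A) : pr A ≠ 1 := by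
  intro h
  rw [pr, QuotientGroup.mk'_apply, QuotientGroup.eq_one_iff] at h
  obtain ⟨r, -, hr⟩ := Matrix.SpecialLinearGroup.mem_center_iff.mp h
  exact hA r hr

lemma ord_x : orderOf x = 5 := by
  haveI : Fact (Nat.Prime 5) := ⟨by norm_num⟩
  refine order_helper _ _ (-1) (by norm_num) ?_ (ne_one_helper _ fun r h => ?_)
  · rw [Matrix.SpecialLinearGroup.coe_pow]
    show _ = (!![u, -u⁻¹; u, 0]) ^ 5
    rw [huinv]
    simp only [pow_succ, pow_zero, one_mul, Matrix.mul_fin_two]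
    refine Matrix.ext fun i j => ?_
    fin_cases i <;> fin_cases j <;> simp
    · linear_combination ((1:ℂ) + (-1:ℂ) * u^1 + (2:ℂ) * u^2) * hu
    · left
      linear_combination ((-1:ℂ) * u^2) * hu
    · linear_combination ((1:ℂ) * u^3) * hu
    · linear_combination ((1:ℂ) + (-1:ℂ) * u^1 + (2:ℂ) * u^2 + (-1:ℂ) * u^3) * hu
  · have h10 := congr_fun (congr_fun h 1) 0
    simp [xSL, Matrix.scalar_apply] at h10
    exact u_ne h10.symm

lemma ord_y : orderOf y = 2 := by
  haveI : Fact (Nat.Prime 2) := ⟨by norm_num⟩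
  refine order_helper _ _ (-1) (by norm_num) ?_ (ne_one_helper _ fun r h => ?_)
  · rw [Matrix.SpecialLinearGroup.coe_pow]
    show _ = (!![0, ω * u⁻¹; -ω⁻¹ * u, 0]) ^ 2
    rw [huinv, hωinv]
    simp only [pow_succ, pow_zero, one_mul, Matrix.mul_fin_two]
    refine Matrix.ext fun i j => ?_
    fin_cases i <;> fin_cases j <;> simp
    · linear_combination ((1:ℂ) * ω^1 + (-1:ℂ) * ω^2) * hu + ((-1:ℂ)) * hω
    · linear_combination ((1:ℂ) * ω^1 + (-1:ℂ) * ω^2) * hu + ((-1:ℂ)) * hω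
  · have h10 := congr_fun (congr_fun h 1) 0
    simp [ySL, Matrix.scalar_apply, ω_ne, u_ne] at h10

lemma ord_z : orderOf z = 2 := by
  haveI : Fact (Nat.Prime 2) := ⟨by norm_num⟩
  refine order_helper _ _ (-1) (by norm_num) ?_ (ne_one_helper _ fun r h => ?_)
  · rw [Matrix.SpecialLinearGroup.coe_pow]
    show _ = (!![0, ω ^ 2 * u⁻¹; -(ω ^ 2)⁻¹ * u, 0]) ^ 2
    rw [huinv, hω2inv]
    simp only [pow_succ, pow_zero, one_mul, Matrix.mul_fin_two]
    refine Matrix.ext fun i j => ?_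
    fin_cases i <;> fin_cases j <;> simp
    · linear_combination ((-1:ℂ) * ω^3) * hu + ((-1:ℂ) + (-1:ℂ) * ω^1) * hω
    · linear_combination ((-1:ℂ) * ω^3) * hu + ((-1:ℂ) + (-1:ℂ) * ω^1) * hω
  · have h10 := congr_fun (congr_fun h 1) 0
    simp [zSL, Matrix.scalar_apply, ω_ne, u_ne, pow_ne_zero] at h10

lemma ord_zx : orderOf (z * x⁻¹) = 3 := by
  haveI : Fact (Nat.Prime 3) := ⟨by norm_num⟩
  have hzx : z * x⁻¹ = pr (zSL * xSL⁻¹) := by rw [map_mul, map_inv]; rfl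
  rw [hzx]
  refine order_helper _ _ (-1) (by norm_num) ?_ (ne_one_helper _ fun r h => ?_)
  · rw [Matrix.SpecialLinearGroup.coe_pow, Matrix.SpecialLinearGroup.coe_mul,
      Matrix.SpecialLinearGroup.coe_inv]
    show _ = ((!![0, ω ^ 2 * u⁻¹; -(ω ^ 2)⁻¹ * u, 0]) *
        Matrix.adjugate (!![u, -u⁻¹; u, 0])) ^ 3
    rw [Matrix.adjugate_fin_two_of, huinv, hω2inv]
    simp only [pow_succ, pow_zero, one_mul, Matrix.mul_fin_two]
    refine Matrix.ext fun i j => ?_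
    fin_cases i <;> fin_cases j <;> simp
    · linear_combination ((-1:ℂ) * ω^6 + (1:ℂ) * u^1 * ω^6 + (-2:ℂ) * u^2 * ω^6 + (2:ℂ) * u^3 * ω^6 + (-1:ℂ) * u^4 * ω^6) * hu + ((1:ℂ) + (1:ℂ) * ω^1 + (-1:ℂ) * ω^3 + (-1:ℂ) * ω^4) * hω
    · linear_combination ((-1:ℂ) * ω^4 + (1:ℂ) * ω^5 + (-1:ℂ) * ω^6 + (1:ℂ) * u^1 * ω^4 + (-1:ℂ) * u^1 * ω^5 + (1:ℂ) * u^1 * ω^6 + (-2:ℂ) * u^2 * ω^4 + (2:ℂ) * u^2 * ω^5 + (-2:ℂ) * u^2 * ω^6 + (2:ℂ) * u^3 * ω^4 + (-2:ℂ) * u^3 * ω^5 + (2:ℂ) * u^3 * ω^6 + (-1:ℂ) * u^4 * ω^4 + (1:ℂ) * u^4 * ω^5 + (-1:ℂ) * u^4 * ω^6) * hu + ((-1:ℂ) * ω^4) * hω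
    · linear_combination ((-1:ℂ) * ω^3 + (1:ℂ) * u^1 * ω^3 + (-2:ℂ) * u^2 * ω^3 + (2:ℂ) * u^3 * ω^3 + (-1:ℂ) * u^4 * ω^3) * hu + ((-1:ℂ) + (-1:ℂ) * ω^1) * hω
  · have h01 := congr_fun (congr_fun h 0) 1
    rw [Matrix.SpecialLinearGroup.coe_mul, Matrix.SpecialLinearGroup.coe_inv] at h01
    simp [zSL, xSL, Matrix.adjugate_fin_two_of, Matrix.mul_fin_two,
      Matrix.scalar_apply, u_ne, ω_ne, pow_ne_zero] at h01
    exact pow_ne_zero 2 ω_ne h01.symm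

lemma ord_xy : orderOf (x * y⁻¹) = 3 := by
  haveI : Fact (Nat.Prime 3) := ⟨by norm_num⟩
  have hxy : x * y⁻¹ = pr (xSL * ySL⁻¹) := by rw [map_mul, map_inv]; rfl
  rw [hxy]
  refine order_helper _ _ 1 (by norm_num) ?_ (ne_one_helper _ fun r h => ?_)
  · rw [Matrix.SpecialLinearGroup.coe_pow, Matrix.SpecialLinearGroup.coe_mul,
      Matrix.SpecialLinearGroup.coe_inv]
    show _ = ((!![u, -u⁻¹; u, 0]) *
        Matrix.adjugate (!![0, ω * u⁻¹; -ω⁻¹ * u, 0])) ^ 3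
    rw [Matrix.adjugate_fin_two_of, huinv, hωinv]
    simp only [pow_succ, pow_zero, one_mul, Matrix.mul_fin_two]
    refine Matrix.ext fun i j => ?_
    fin_cases i <;> fin_cases j <;> simp
    · linear_combination ((1:ℂ) + (-3:ℂ) * ω^1 + (3:ℂ) * ω^2 + (-1:ℂ) * ω^3 + (-1:ℂ) * u^1 + (3:ℂ) * u^1 * ω^1 + (-3:ℂ) * u^1 * ω^2 + (1:ℂ) * u^1 * ω^3 + (2:ℂ) * u^2 + (-6:ℂ) * u^2 * ω^1 + (6:ℂ) * u^2 * ω^2 + (-2:ℂ) * u^2 * ω^3 + (-2:ℂ) * u^3 + (6:ℂ) * u^3 * ω^1 + (-6:ℂ) * u^3 * ω^2 + (2:ℂ) * u^3 * ω^3 + (1:ℂ) * u^4 + (-3:ℂ) * u^4 * ω^1 + (3:ℂ) * u^4 * ω^2 + (-1:ℂ) * u^4 * ω^3) * hu + ((2:ℂ) + (-1:ℂ) * ω^1) * hω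
    · linear_combination ((1:ℂ) * ω^1 + (-1:ℂ) * ω^2 + (1:ℂ) * ω^3 + (-1:ℂ) * u^1 * ω^1 + (1:ℂ) * u^1 * ω^2 + (-1:ℂ) * u^1 * ω^3 + (2:ℂ) * u^2 * ω^1 + (-2:ℂ) * u^2 * ω^2 + (2:ℂ) * u^2 * ω^3 + (-2:ℂ) * u^3 * ω^1 + (2:ℂ) * u^3 * ω^2 + (-2:ℂ) * u^3 * ω^3 + (1:ℂ) * u^4 * ω^1 + (-1:ℂ) * u^4 * ω^2 + (1:ℂ) * u^4 * ω^3) * hu + ((1:ℂ) * ω^1) * hω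
    · linear_combination ((1:ℂ) * ω^3 + (-1:ℂ) * u^1 * ω^3 + (2:ℂ) * u^2 * ω^3 + (-2:ℂ) * u^3 * ω^3 + (1:ℂ) * u^4 * ω^3) * hu + ((1:ℂ) + (1:ℂ) * ω^1) * hω
  · have h01 := congr_fun (congr_fun h 0) 1
    rw [Matrix.SpecialLinearGroup.coe_mul, Matrix.SpecialLinearGroup.coe_inv] at h01
    simp [xSL, ySL, Matrix.adjugate_fin_two_of, Matrix.mul_fin_two,
      Matrix.scalar_apply, u_ne, ω_ne] at h01

lemma ord_yz : orderOf (y * z⁻¹) = 3 := by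
  haveI : Fact (Nat.Prime 3) := ⟨by norm_num⟩
  have hyz : y * z⁻¹ = pr (ySL * zSL⁻¹) := by rw [map_mul, map_inv]; rfl
  rw [hyz]
  refine order_helper _ _ (-1) (by norm_num) ?_ (ne_one_helper _ fun r h => ?_)
  · rw [Matrix.SpecialLinearGroup.coe_pow, Matrix.SpecialLinearGroup.coe_mul,
      Matrix.SpecialLinearGroup.coe_inv]
    show _ = ((!![0, ω * u⁻¹; -ω⁻¹ * u, 0]) *
        Matrix.adjugate (!![0, ω ^ 2 * u⁻¹; -(ω ^ 2)⁻¹ * u, 0])) ^ 3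
    rw [Matrix.adjugate_fin_two_of, huinv, hωinv, hω2inv]
    simp only [pow_succ, pow_zero, one_mul, Matrix.mul_fin_two]
    refine Matrix.ext fun i j => ?_
    fin_cases i <;> fin_cases j <;> simp
    · linear_combination ((-1:ℂ) * ω^6 + (1:ℂ) * u^1 * ω^6 + (-2:ℂ) * u^2 * ω^6 + (2:ℂ) * u^3 * ω^6 + (-1:ℂ) * u^4 * ω^6) * hu + ((1:ℂ) + (1:ℂ) * ω^1 + (-1:ℂ) * ω^3 + (-1:ℂ) * ω^4) * hω
    · linear_combination ((1:ℂ) * ω^6 + (-3:ℂ) * ω^7 + (3:ℂ) * ω^8 + (-1:ℂ) * ω^9 + (-1:ℂ) * u^1 * ω^6 + (3:ℂ) * u^1 * ω^7 + (-3:ℂ) * u^1 * ω^8 + (1:ℂ) * u^1 * ω^9 + (2:ℂ) * u^2 * ω^6 + (-6:ℂ) * u^2 * ω^7 + (6:ℂ) * u^2 * ω^8 + (-2:ℂ) * u^2 * ω^9 + (-2:ℂ) * u^3 * ω^6 + (6:ℂ) * u^3 * ω^7 + (-6:ℂ) * u^3 * ω^8 + (2:ℂ) * u^3 * ω^9 +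 (1:ℂ) * u^4 * ω^6 + (-3:ℂ) * u^4 * ω^7 + (3:ℂ) * u^4 * ω^8 + (-1:ℂ) * u^4 * ω^9) * hu + ((1:ℂ) + (1:ℂ) * ω^1 + (-1:ℂ) * ω^3 + (-1:ℂ) * ω^4 + (2:ℂ) * ω^6 + (-1:ℂ) * ω^7) * hω
  · have h00 := congr_fun (congr_fun h 0) 0
    have h11 := congr_fun (congr_fun h 1) 1
    rw [Matrix.SpecialLinearGroup.coe_mul, Matrix.SpecialLinearGroup.coe_inv] at h00 h11
    simp [ySL, zSL, Matrix.adjugate_fin_two_of, Matrix.mul_fin_two,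
      Matrix.scalar_apply] at h00 h11
    have hkey : ω * (u-1) * (-ω * u) = (1 - ω) * u * (ω ^ 2 * (u-1)) := by
      rw [huinv, hω2inv] at h00
      rw [huinv, hωinv] at h11
      linear_combination h00.symm.trans h11
    have hq : ω = 1/2 := by
      linear_combination (-1/2 : ℂ) * hkey + ((1/2:ℂ) * ω^3 + (-1:ℂ) * ω^2) * hu + ((1/2:ℂ) * ω + (-1/2:ℂ)) * hω
    have h3 : Real.sqrt 3 ≠ 0 := by positivity
    have him := congrArg Complex.im hq
    simp [ω, h3] at him

theorem stmt0 :
    orderOf x = 5 ∧ orderOf y = 2 ∧ orderOf z = 2 ∧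
    orderOf (z * x⁻¹) = 3 ∧ orderOf (x * y⁻¹) = 3 ∧ orderOf (y * z⁻¹) = 3 :=
  ⟨ord_x, ord_y, ord_z, ord_zx, ord_xy, ord_yz⟩
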